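/- Let t_r denote the number of transitive pairs (σ,τ) ∈ S_r × S_r, so that h_r := t_r/(r−1)! is the total number of rooted hypermaps with r darts. Then for every r ≥ 1, h_r = r · r! − Σ_{k=1}^{r−1} k! · h_{r−k}. -/

import Mathlib

open Finset

/-- A pair of permutations is transitive if the subgroup they generate acts
transitively on `Fin r`. -/
def IsTransitivePair {r : ℕ} (σ τ : Equiv.Perm (Fin r)) : Prop :=
  ∀ x y : Fin r, ∃ g ∈ Subgroup.closure ({σ, τ} : Set (Equiv.Perm (Fin r))), g x = y

/-- `t_r`: the number of transitive pairs `(σ,τ) ∈ S_r × S_r`. -/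
noncomputable def transPairs (r : ℕ) : ℕ :=
  Nat.card {p : Equiv.Perm (Fin r) × Equiv.Perm (Fin r) // IsTransitivePair p.1 p.2}

/-- `h_r = t_r/(r-1)!`: the total number of rooted hypermaps with `r` darts. -/
noncomputable def totalHypermaps (r : ℕ) : ℚ :=
  (transPairs r : ℚ) / (r - 1).factorial

/-! ### Auxiliary development -/

section Aux

/-- General transitive pair predicate (on an arbitrary type). -/
def TP {α : Type*} (σ τ : Equiv.Perm α) : Prop :=
  ∀ x y : α, ∃ g ∈ Subgroup.closure ({σ, τ} : Set (Equiv.Perm α)), g x = y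

/-- `permCongr` as a `MulEquiv`. -/
def pCM {α β : Type*} (e : α ≃ β) : Equiv.Perm α ≃* Equiv.Perm β :=
  { e.permCongr with
    map_mul' := fun x y => by ext b; simp [Equiv.permCongr_apply] }

lemma pCM_apply {α β : Type*} (e : α ≃ β) (σ : Equiv.Perm α) (x : β) :
    pCM e σ x = e (σ (e.symm x)) := rfl

lemma closure_pair_map {G H : Type*} [Group G] [Group H] (f : G →* H) (a b : G) :
    Subgroup.map f (Subgroup.closure ({a, b} : Set G)) =
      Subgroup.closure ({f a, f b} : Set H) := by
  rw [MonoidHom.map_closure]; congr 1; simp [Set.image_insert_eq]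

lemma TP_congr {α β : Type*} (e : α ≃ β) (σ τ : Equiv.Perm α) (h : TP σ τ) :
    TP (pCM e σ) (pCM e τ) := by
  intro x y
  obtain ⟨g, hg, hgx⟩ := h (e.symm x) (e.symm y)
  refine ⟨pCM e g, ?_, ?_⟩
  · show (pCM e).toMonoidHom g ∈
        Subgroup.closure {(pCM e).toMonoidHom σ, (pCM e).toMonoidHom τ}
    rw [← closure_pair_map (pCM e).toMonoidHom]
    exact ⟨g, hg, rfl⟩
  · rw [pCM_apply, hgx]; simp

lemma TP_congr_iff {α β : Type*} (e : α ≃ β) (σ τ : Equiv.Perm α) :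
    TP σ τ ↔ TP (pCM e σ) (pCM e τ) := by
  refine ⟨TP_congr e σ τ, fun h => ?_⟩
  have := TP_congr e.symm _ _ h
  convert this using 2 <;> ext x <;> simp [pCM_apply]

variable {r : ℕ} (A : Finset (Fin r))

/-- Joining a permutation of `A` and a permutation of its complement into a
permutation of `Fin r`, as a monoid hom. -/
def J : Equiv.Perm {x : Fin r // x ∈ A} × Equiv.Perm {x : Fin r // ¬ x ∈ A} →*
    Equiv.Perm (Fin r) :=
  (pCM (Equiv.sumCompl (· ∈ A))).toMonoidHom.comp (Equiv.Perm.sumCongrHom _ _)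

lemma J_apply_mem (q) (x : Fin r) (hx : x ∈ A) : J A q x = ↑(q.1 ⟨x, hx⟩) := by
  show (Equiv.sumCompl (· ∈ A)) ((Equiv.sumCongr q.1 q.2)
    ((Equiv.sumCompl (· ∈ A)).symm x)) = _
  rw [Equiv.sumCompl_symm_apply_of_pos hx]
  simp

lemma J_apply_not_mem (q) (x : Fin r) (hx : ¬ x ∈ A) : J A q x = ↑(q.2 ⟨x, hx⟩) := by
  show (Equiv.sumCompl (· ∈ A)) ((Equiv.sumCongr q.1 q.2)
    ((Equiv.sumCompl (· ∈ A)).symm x)) = _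
  rw [Equiv.sumCompl_symm_apply_of_neg hx]
  simp

lemma J_injective : Function.Injective (J A) := fun _ _ h =>
  Equiv.Perm.sumCongrHom_injective ((pCM (Equiv.sumCompl (· ∈ A))).injective h)

lemma J_surj (σ : Equiv.Perm (Fin r)) (hσ : ∀ x, x ∈ A ↔ σ x ∈ A) :
    ∃ q, J A q = σ := by
  refine ⟨(σ.subtypePerm fun x => (hσ x).symm, σ.subtypePerm fun x => not_iff_not.2 (hσ x).symm), ?_⟩
  ext x
  by_cases hx : x ∈ A
  · rw [J_apply_mem A _ x hx]; rfl
  · rw [J_apply_not_mem A _ x hx]; rfl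

variable [NeZero r]

/-- The orbit of `0` under the subgroup generated by a pair of permutations. -/
def Orb (p : Equiv.Perm (Fin r) × Equiv.Perm (Fin r)) : Set (Fin r) :=
  {y | ∃ g ∈ Subgroup.closure ({p.1, p.2} : Set (Equiv.Perm (Fin r))), g 0 = y}

lemma zero_mem_orb (p) : (0 : Fin r) ∈ Orb p := ⟨1, Subgroup.one_mem _, rfl⟩

lemma orb_smul {p} {g : Equiv.Perm (Fin r)}
    (hg : g ∈ Subgroup.closure ({p.1, p.2} : Set (Equiv.Perm (Fin r))))
    {y : Fin r} (hy : y ∈ Orb p) : g y ∈ Orb p := by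
  obtain ⟨g', hg', rfl⟩ := hy
  exact ⟨g * g', Subgroup.mul_mem _ hg hg', rfl⟩

lemma orb_preserve {p} {B : Finset (Fin r)} (hB : Orb p = ↑B) (σ : Equiv.Perm (Fin r))
    (hσ : σ ∈ Subgroup.closure ({p.1, p.2} : Set (Equiv.Perm (Fin r)))) (x : Fin r) :
    x ∈ B ↔ σ x ∈ B := by
  constructor
  · intro hx
    have : σ x ∈ Orb p := orb_smul hσ (by rw [hB]; exact hx)
    rwa [hB] at this
  · intro hx
    have : σ⁻¹ (σ x) ∈ Orb p := orb_smul (Subgroup.inv_mem _ hσ) (by rw [hB]; exact hx)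
    rwa [hB, ← Equiv.Perm.mul_apply, inv_mul_cancel, Equiv.Perm.one_apply] at this

omit [NeZero r] in
lemma TP_iff_reach {α : Type*} (σ τ : Equiv.Perm α) (z : α) :
    TP σ τ ↔ ∀ y, ∃ g ∈ Subgroup.closure ({σ, τ} : Set (Equiv.Perm α)), g z = y := by
  constructor
  · exact fun h y => h z y
  · intro h x y
    obtain ⟨gx, hgx, hx⟩ := h x
    obtain ⟨gy, hgy, hy⟩ := h y
    refine ⟨gy * gx⁻¹, Subgroup.mul_mem _ hgy (Subgroup.inv_mem _ hgx), ?_⟩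
    simp [← hx, ← hy]

omit [NeZero r] in
lemma mem_closure_J_iff (q₁ q₂) (g : Equiv.Perm (Fin r)) :
    g ∈ Subgroup.closure ({J A q₁, J A q₂} : Set (Equiv.Perm (Fin r))) ↔
      ∃ q ∈ Subgroup.closure ({q₁, q₂} : Set _), J A q = g := by
  rw [← closure_pair_map (J A) q₁ q₂]; rfl

omit [NeZero r] in
lemma fst_closure_iff (q₁ q₂ : Equiv.Perm {x : Fin r // x ∈ A} ×
    Equiv.Perm {x : Fin r // ¬ x ∈ A}) (u) :
    u ∈ Subgroup.closure ({q₁.1, q₂.1} : Set _) ↔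
      ∃ q ∈ Subgroup.closure ({q₁, q₂} : Set _), q.1 = u := by
  show u ∈ Subgroup.closure {MonoidHom.fst _ _ q₁, MonoidHom.fst _ _ q₂} ↔ _
  rw [← closure_pair_map (MonoidHom.fst _ _) q₁ q₂]; rfl

lemma orb_J_eq_iff (h0 : (0 : Fin r) ∈ A) (q₁ q₂) :
    Orb (J A q₁, J A q₂) = ↑A ↔ TP q₁.1 q₂.1 := by
  have horb : Orb (J A q₁, J A q₂) =
      {y | ∃ u ∈ Subgroup.closure ({q₁.1, q₂.1} : Set _), ↑(u ⟨0, h0⟩) = y} := by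
    ext y
    simp only [Orb, Set.mem_setOf_eq, mem_closure_J_iff]
    constructor
    · rintro ⟨g, ⟨q, hq, rfl⟩, rfl⟩
      exact ⟨q.1, (fst_closure_iff A q₁ q₂ q.1).2 ⟨q, hq, rfl⟩, (J_apply_mem A q 0 h0).symm⟩
    · rintro ⟨u, hu, rfl⟩
      obtain ⟨q, hq, rfl⟩ := (fst_closure_iff A q₁ q₂ u).1 hu
      exact ⟨J A q, ⟨q, hq, rfl⟩, J_apply_mem A q 0 h0⟩
  rw [horb, TP_iff_reach q₁.1 q₂.1 ⟨0, h0⟩]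
  constructor
  · intro h y
    have : (y : Fin r) ∈ ({y | ∃ u ∈ Subgroup.closure ({q₁.1, q₂.1} : Set _),
        ↑(u ⟨0, h0⟩) = y} : Set (Fin r)) := by rw [h]; exact y.2
    obtain ⟨u, hu, huy⟩ := this
    exact ⟨u, hu, Subtype.ext huy⟩
  · intro h
    ext y
    constructor
    · rintro ⟨u, hu, rfl⟩; exact (u ⟨0, h0⟩).2
    · intro hy
      obtain ⟨u, hu, huy⟩ := h ⟨y, hy⟩
      exact ⟨u, hu, by rw [huy]⟩

lemma card_fiber (h0 : (0 : Fin r) ∈ A) :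
    Nat.card {p : Equiv.Perm (Fin r) × Equiv.Perm (Fin r) // Orb p = ↑A} =
      transPairs A.card * ((r - A.card).factorial) ^ 2 := by
  classical
  have e1 : {Q : (Equiv.Perm {x : Fin r // x ∈ A} × Equiv.Perm {x : Fin r // ¬ x ∈ A}) ×
        (Equiv.Perm {x : Fin r // x ∈ A} × Equiv.Perm {x : Fin r // ¬ x ∈ A}) //
        TP Q.1.1 Q.2.1} ≃
      {p : Equiv.Perm (Fin r) × Equiv.Perm (Fin r) // Orb p = ↑A} := by
    refine Equiv.ofBijective
      (fun Q => ⟨(J A Q.1.1, J A Q.1.2), (orb_J_eq_iff A h0 Q.1.1 Q.1.2).2 Q.2⟩) ⟨?_, ?_⟩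
    · rintro ⟨⟨a1, a2⟩, ha⟩ ⟨⟨b1, b2⟩, hb⟩ h
      simp only [Subtype.mk.injEq, Prod.mk.injEq] at h ⊢
      exact ⟨J_injective A h.1, J_injective A h.2⟩
    · rintro ⟨⟨σ, τ⟩, hp⟩
      obtain ⟨q₁, hq₁⟩ := J_surj A σ (fun x => orb_preserve hp σ
        (Subgroup.subset_closure (by simp)) x)
      obtain ⟨q₂, hq₂⟩ := J_surj A τ (fun x => orb_preserve hp τ
        (Subgroup.subset_closure (by simp)) x)
      refine ⟨⟨(q₁, q₂), ?_⟩, by simp [hq₁, hq₂]⟩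
      apply (orb_J_eq_iff A h0 q₁ q₂).1
      rw [hq₁, hq₂]; exact hp
  have e2 : {Q : (Equiv.Perm {x : Fin r // x ∈ A} × Equiv.Perm {x : Fin r // ¬ x ∈ A}) ×
        (Equiv.Perm {x : Fin r // x ∈ A} × Equiv.Perm {x : Fin r // ¬ x ∈ A}) //
        TP Q.1.1 Q.2.1} ≃
      {w : Equiv.Perm {x : Fin r // x ∈ A} × Equiv.Perm {x : Fin r // x ∈ A} // TP w.1 w.2} ×
        (Equiv.Perm {x : Fin r // ¬ x ∈ A} × Equiv.Perm {x : Fin r // ¬ x ∈ A}) :=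
    { toFun := fun Q => (⟨(Q.1.1.1, Q.1.2.1), Q.2⟩, (Q.1.1.2, Q.1.2.2))
      invFun := fun W => ⟨((W.1.1.1, W.2.1), (W.1.1.2, W.2.2)), W.1.2⟩
      left_inv := fun _ => rfl
      right_inv := fun _ => rfl }
  have eF : {x : Fin r // x ∈ A} ≃ Fin A.card :=
    Fintype.equivFinOfCardEq (Fintype.card_coe A)
  have e3 : {w : Equiv.Perm {x : Fin r // x ∈ A} × Equiv.Perm {x : Fin r // x ∈ A} //
        TP w.1 w.2} ≃
      {p : Equiv.Perm (Fin A.card) × Equiv.Perm (Fin A.card) // IsTransitivePair p.1 p.2} :=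
    Equiv.subtypeEquiv (Equiv.prodCongr (pCM eF).toEquiv (pCM eF).toEquiv)
      (fun w => TP_congr_iff eF w.1 w.2)
  have hcAc : Nat.card (Equiv.Perm {x : Fin r // ¬ x ∈ A}) = (r - A.card).factorial := by
    rw [Nat.card_eq_fintype_card, Fintype.card_perm, Fintype.card_subtype_compl,
      Fintype.card_coe, Fintype.card_fin]
  rw [← Nat.card_congr e1, Nat.card_congr e2, Nat.card_prod, Nat.card_congr e3,
    Nat.card_prod, hcAc]
  rw [transPairs, pow_two]

lemma global_count :
    (r.factorial) ^ 2 =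
      ∑ A ∈ Finset.univ.filter (fun A : Finset (Fin r) => (0 : Fin r) ∈ A),
        transPairs A.card * ((r - A.card).factorial) ^ 2 := by
  classical
  have hOf : ∀ p : Equiv.Perm (Fin r) × Equiv.Perm (Fin r),
      (Set.toFinite (Orb p)).toFinset ∈
        Finset.univ.filter (fun A : Finset (Fin r) => (0 : Fin r) ∈ A) := by
    intro p
    simp only [Finset.mem_filter, Finset.mem_univ, true_and, Set.Finite.mem_toFinset]
    exact zero_mem_orb p
  have := Finset.card_eq_sum_card_fiberwise
    (s := (Finset.univ : Finset (Equiv.Perm (Fin r) × Equiv.Perm (Fin r))))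
    (fun p _ => hOf p)
  have hcard : (Finset.univ : Finset (Equiv.Perm (Fin r) × Equiv.Perm (Fin r))).card =
      r.factorial ^ 2 := by
    simp [Fintype.card_perm, pow_two]
  rw [hcard] at this
  rw [this]
  refine Finset.sum_congr rfl fun B hB => ?_
  have h0 : (0 : Fin r) ∈ B := by simpa using hB
  rw [← card_fiber B h0]
  rw [Nat.card_eq_fintype_card, ← Fintype.card_subtype]
  apply Fintype.card_congr
  apply Equiv.subtypeEquivRight
  intro p
  rw [← Finset.coe_inj, Set.Finite.coe_toFinset]

omit [NeZero r] in
lemma count_subsets {m : ℕ} [NeZero r] (hm : 1 ≤ m) :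
    (Finset.univ.filter (fun A : Finset (Fin r) =>
        (0 : Fin r) ∈ A ∧ A.card = m)).card = (r - 1).choose (m - 1) := by
  classical
  have hc : ((Finset.univ : Finset (Fin r)).erase 0).card = r - 1 := by
    rw [Finset.card_erase_of_mem (Finset.mem_univ _), Finset.card_univ, Fintype.card_fin]
  rw [← hc, ← Finset.card_powersetCard (m - 1) ((Finset.univ : Finset (Fin r)).erase 0)]
  refine Finset.card_bij' (fun (A : Finset (Fin r)) _ => A.erase 0)
    (fun (B : Finset (Fin r)) _ => insert 0 B) ?_ ?_ ?_ ?_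
  · rintro B hB
    simp only [Finset.mem_filter, Finset.mem_univ, true_and] at hB
    rw [Finset.mem_powersetCard]
    exact ⟨fun x hx => Finset.mem_erase.2 ⟨(Finset.mem_erase.1 hx).1, Finset.mem_univ _⟩,
      by rw [Finset.card_erase_of_mem hB.1, hB.2]⟩
  · rintro B hB
    rw [Finset.mem_powersetCard] at hB
    have h0B : (0 : Fin r) ∉ B := fun h => (Finset.mem_erase.1 (hB.1 h)).1 rfl
    simp only [Finset.mem_filter, Finset.mem_univ, true_and]
    exact ⟨Finset.mem_insert_self _ _, by
      rw [Finset.card_insert_of_notMem h0B, hB.2]; omega⟩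
  · rintro B hB
    simp only [Finset.mem_filter, Finset.mem_univ, true_and] at hB
    exact Finset.insert_erase hB.1
  · rintro B hB
    rw [Finset.mem_powersetCard] at hB
    exact Finset.erase_insert (fun h => (Finset.mem_erase.1 (hB.1 h)).1 rfl)

lemma grouped_count :
    (r.factorial) ^ 2 =
      ∑ m ∈ Finset.Icc 1 r,
        (r - 1).choose (m - 1) * (transPairs m * ((r - m).factorial) ^ 2) := by
  classical
  rw [global_count (r := r)]
  rw [← Finset.sum_fiberwise_of_maps_to (g := fun A : Finset (Fin r) => A.card)
    (t := Finset.Icc 1 r) ?hmap]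
  case hmap =>
    intro B hB
    simp only [Finset.mem_filter, Finset.mem_univ, true_and] at hB
    rw [Finset.mem_Icc]
    constructor
    · exact Finset.card_pos.2 ⟨0, hB⟩
    · simpa using Finset.card_le_univ B
  refine Finset.sum_congr rfl fun m hm => ?_
  rw [Finset.mem_Icc] at hm
  rw [Finset.filter_filter]
  rw [Finset.sum_congr rfl (fun B hB => ?_)]
  · rw [Finset.sum_const, ← count_subsets (r := r) hm.1, smul_eq_mul]
  · simp only [Finset.mem_filter] at hB
    rw [hB.2.2]

end Aux

/-- The total number of rooted hypermaps with `r` darts satisfies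
`h_r = r·r! - Σ_{k=1}^{r-1} k! · h_{r-k}`. -/
theorem totalHypermaps_recursion (r : ℕ) (hr : 1 ≤ r) :
    totalHypermaps r =
      (r : ℚ) * (r.factorial : ℚ) -
        ∑ k ∈ Finset.Icc 1 (r - 1), (k.factorial : ℚ) * totalHypermaps (r - k) := by
  haveI : NeZero r := ⟨by omega⟩
  have hfac : ((r - 1).factorial : ℚ) ≠ 0 := by
    exact_mod_cast (r - 1).factorial_ne_zero
  have key : ((r.factorial : ℚ)) ^ 2 =
      ∑ m ∈ Finset.Icc 1 r,
        ((r - 1).choose (m - 1) : ℚ) * (transPairs m * ((r - m).factorial) ^ 2) := by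
    exact_mod_cast grouped_count (r := r)
  have main : (r : ℚ) * r.factorial =
      ∑ m ∈ Finset.Icc 1 r, ((r - m).factorial : ℚ) * totalHypermaps m := by
    apply mul_right_cancel₀ hfac
    have hlhs : (r : ℚ) * r.factorial * (r - 1).factorial = (r.factorial : ℚ) ^ 2 := by
      have : (r : ℚ) * (r - 1).factorial = r.factorial := by
        exact_mod_cast Nat.mul_factorial_pred (by omega : r ≠ 0)
      rw [pow_two, ← this]; ring
    rw [hlhs, key, Finset.sum_mul]
    refine Finset.sum_congr rfl fun m hm => ?_
    rw [Finset.mem_Icc] at hm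
    have h1 : ((r - 1).choose (m - 1) : ℚ) * ((m - 1).factorial) * ((r - m).factorial) =
        ((r - 1).factorial : ℚ) := by
      have := Nat.choose_mul_factorial_mul_factorial (show m - 1 ≤ r - 1 by omega)
      have h2 : r - 1 - (m - 1) = r - m := by omega
      rw [h2] at this
      exact_mod_cast this
    have hg : ((m - 1).factorial : ℚ) ≠ 0 := by exact_mod_cast (m - 1).factorial_ne_zero
    rw [totalHypermaps]
    field_simp
    linear_combination (transPairs m : ℚ) * h1
  obtain ⟨s, rfl⟩ : ∃ s, r = s + 1 := ⟨r - 1, by omega⟩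
  have hsplit : ∑ m ∈ Finset.Icc 1 (s + 1), ((s + 1 - m).factorial : ℚ) * totalHypermaps m =
      (∑ m ∈ Finset.Icc 1 s, ((s + 1 - m).factorial : ℚ) * totalHypermaps m) +
        totalHypermaps (s + 1) := by
    rw [Finset.sum_Icc_succ_top (by omega)]
    simp
  have hre : ∑ m ∈ Finset.Icc 1 s, ((s + 1 - m).factorial : ℚ) * totalHypermaps m =
      ∑ k ∈ Finset.Icc 1 s, ((k.factorial : ℚ)) * totalHypermaps (s + 1 - k) := by
    refine Finset.sum_nbij' (fun m => s + 1 - m) (fun k => s + 1 - k) ?_ ?_ ?_ ?_ ?_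
    · intro a ha; rw [Finset.mem_Icc] at *; omega
    · intro a ha; rw [Finset.mem_Icc] at *; omega
    · intro a ha; rw [Finset.mem_Icc] at ha; omega
    · intro a ha; rw [Finset.mem_Icc] at ha; omega
    · intro a ha
      rw [Finset.mem_Icc] at ha
      have : s + 1 - (s + 1 - a) = a := by omega
      rw [this]
  rw [main, hsplit, hre]
  simp
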